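/- Symmetrization does not decrease Eve's information: for every attack E and every POVM (X_α)_{α ∈ A} on ℂ^M, the family (|e_m⟩⟨e_m| ⊗ X_α)_{(m,α) ∈ I × A} is a POVM on ℂ^{2^N} ⊗ ℂ^M, and the Shannon mutual information between the uniform input i ∈ I and the outcome (m, α) with conditional probabilities p^s(m, α | i) := ∑_{j ∈ I} ⟨E^s i j, (|e_m⟩⟨e_m| ⊗ X_α)(E^s i j)⟩ equals Eve's information gain I(A:E[X]|b) computed from the original attack. -/

import Mathlib

open scoped ComplexInnerProductSpace ComplexOrder
open Finset

namespace IDT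

/-- N-bit strings. -/
abbrev Bits (N : ℕ) := Fin N → ZMod 2

/-- Bitwise dot product `i·k := ∑ n i_n k_n` (lifting bits to naturals). -/
def bdot {N : ℕ} (i k : Bits N) : ℕ := ∑ n, (i n).val * (k n).val

/-- Eve's attack: unitarity condition on the family of vectors. -/
def Attack {N M : ℕ} (E : Bits N → Bits N → EuclideanSpace ℂ (Fin M)) : Prop :=
  ∀ i k : Bits N, (∑ j : Bits N, ⟪E i j, E k j⟫) = if i = k then 1 else 0

/-- Conjugate-basis vectors `Ē l s := 2^{-N} ∑_{i,j} (-1)^{s·j + i·l} E i j`. -/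
noncomputable def Ebar {N M : ℕ} (E : Bits N → Bits N → EuclideanSpace ℂ (Fin M))
    (l s : Bits N) : EuclideanSpace ℂ (Fin M) :=
  (2 ^ N : ℂ)⁻¹ • ∑ i : Bits N, ∑ j : Bits N, ((-1 : ℂ) ^ (bdot s j + bdot i l)) • E i j

/-- Error distribution of Bob's conjugate-basis outcome. -/
noncomputable def pbar {N M : ℕ} (E : Bits N → Bits N → EuclideanSpace ℂ (Fin M))
    (c : Bits N) : ℝ :=
  (2 ^ N : ℝ)⁻¹ * ∑ i : Bits N, ‖Ebar E i (i + c)‖ ^ 2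

/-- `-x log₂ x` (with the convention `0 log₂ 0 = 0`). -/
noncomputable def ent2 (x : ℝ) : ℝ := -(x * Real.logb 2 x)

/-- A POVM on `ℂ^M` with finite outcome set `A`. -/
structure POVM (A : Type*) [Fintype A] (M : ℕ) where
  X : A → Matrix (Fin M) (Fin M) ℂ
  posSemidef : ∀ a : A, (X a).PosSemidef
  sum_one : ∑ a : A, X a = 1

/-- Eve's outcome probability `p(α|i)`. -/
noncomputable def pOut {N M : ℕ} {A : Type*} [Fintype A]
    (E : Bits N → Bits N → EuclideanSpace ℂ (Fin M)) (P : POVM A M) (a : A) (i : Bits N) : ℝ :=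
  (∑ j : Bits N, ⟪E i j, Matrix.toEuclideanLin (P.X a) (E i j)⟫).re

/-- (base-2) Shannon mutual information of a joint distribution. -/
noncomputable def mutualInfo {S T : Type*} [Fintype S] [Fintype T] (p : S → T → ℝ) : ℝ :=
  (∑ s, ent2 (∑ t, p s t)) + (∑ t, ent2 (∑ s, p s t)) - ∑ s, ∑ t, ent2 (p s t)

/-- Eve's information gain `I(A:E[X]|b)`. -/
noncomputable def infoGain {N M : ℕ} {A : Type*} [Fintype A]
    (E : Bits N → Bits N → EuclideanSpace ℂ (Fin M)) (P : POVM A M) : ℝ :=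
  mutualInfo (fun (i : Bits N) (a : A) => (2 ^ N : ℝ)⁻¹ * pOut E P a i)

/-- Elementary tensor of two Euclidean-space vectors. -/
noncomputable def tens {α β : Type*} (u : EuclideanSpace ℂ α) (v : EuclideanSpace ℂ β) :
    EuclideanSpace ℂ (α × β) :=
  (WithLp.equiv 2 ((α × β) → ℂ)).symm (fun p => u p.1 * v p.2)

/-- Symmetrized attack vectors. -/
noncomputable def Es {N M : ℕ} (E : Bits N → Bits N → EuclideanSpace ℂ (Fin M))
    (i j : Bits N) : EuclideanSpace ℂ (Bits N × Fin M) :=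
  (((Real.sqrt (2 ^ N))⁻¹ : ℝ) : ℂ) •
    ∑ m : Bits N, ((-1 : ℂ) ^ bdot m (i + j)) • tens (EuclideanSpace.single m 1) (E (i + m) (j + m))

/-- The operator `|e_m⟩⟨e_m| ⊗ X` as a matrix on `ℂ^{2^N} ⊗ ℂ^M`. -/
def projTens {N M : ℕ} (m : Bits N) (X : Matrix (Fin M) (Fin M) ℂ) :
    Matrix (Bits N × Fin M) (Bits N × Fin M) ℂ :=
  Matrix.of fun p q => (if p.1 = m ∧ q.1 = m then 1 else 0) * X p.2 q.2

/-- Purification vectors `φ_i`. -/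
noncomputable def phi {N M : ℕ} (E : Bits N → Bits N → EuclideanSpace ℂ (Fin M))
    (i : Bits N) : EuclideanSpace ℂ ((Bits N × Fin M) × Bits N) :=
  ∑ j : Bits N, tens (Es E i j) (EuclideanSpace.single (i + j) 1)

/-- Rank-one projection `|ψ⟩⟨ψ|` as a matrix. -/
noncomputable def outer {α : Type*} (ψ : EuclideanSpace ℂ α) : Matrix α α ℂ :=
  Matrix.of fun x y => ψ x * star (ψ y)

/-- Partial trace over the second tensor factor. -/
noncomputable def ptraceSnd {α β : Type*} [Fintype β] (Θ : Matrix (α × β) (α × β) ℂ) : Matrix α α ℂ :=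
  Matrix.of fun i j => ∑ b : β, Θ (i, b) (j, b)

/-- Partial trace over the first tensor factor. -/
noncomputable def ptraceFst {α β : Type*} [Fintype α] (Θ : Matrix (α × β) (α × β) ℂ) : Matrix β β ℂ :=
  Matrix.of fun x y => ∑ a : α, Θ (a, x) (a, y)

-- von Neumann entropy (base 2) of a Hermitian matrix (junk value `0` otherwise).
open Classical in
noncomputable def vN {n : Type*} [Fintype n] [DecidableEq n] (ρ : Matrix n n ℂ) : ℝ :=
  if h : ρ.IsHermitian then ∑ i, ent2 (h.eigenvalues i) else 0

/-- Classical–quantum state `∑ i p_i |e_i⟩⟨e_i| ⊗ ρ_i`. -/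
def cqState {F G : Type*} [DecidableEq F] (p : F → ℝ) (ρ : F → Matrix G G ℂ) :
    Matrix (F × G) (F × G) ℂ :=
  Matrix.of fun x y => if x.1 = y.1 then (p x.1 : ℂ) * ρ x.1 x.2 y.2 else 0



section Aux

lemma ent2_mul (x y : ℝ) : ent2 (x * y) = y * ent2 x + x * ent2 y := by
  rcases eq_or_ne x 0 with rfl | hx
  · simp [ent2]
  rcases eq_or_ne y 0 with rfl | hy
  · simp [ent2]
  unfold ent2
  rw [Real.logb, Real.log_mul hx hy]
  unfold Real.logb
  ring

lemma euclid_sum_apply {ι κ : Type*} [Fintype ι] (f : ι → EuclideanSpace ℂ κ) (p : κ) :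
    (∑ m, f m) p = ∑ m, f m p := by
  rw [WithLp.ofLp_sum]; exact Finset.sum_apply p Finset.univ _

lemma Es_apply {N M : ℕ} (E : Bits N → Bits N → EuclideanSpace ℂ (Fin M)) (i j n : Bits N)
    (x : Fin M) :
    Es E i j (n, x) = (((Real.sqrt (2 ^ N))⁻¹ : ℝ) : ℂ) *
      ((-1 : ℂ) ^ bdot n (i + j) * E (i + n) (j + n) x) := by
  unfold Es
  rw [PiLp.smul_apply, euclid_sum_apply, smul_eq_mul]
  congr 1
  rw [Finset.sum_eq_single n]
  · rw [PiLp.smul_apply, smul_eq_mul]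
    congr 1
    show (EuclideanSpace.single n (1:ℂ)) n * (E (i+n) (j+n)) x = _
    rw [EuclideanSpace.single_apply]
    simp
  · intro b _ hb
    rw [PiLp.smul_apply, smul_eq_mul]
    show _ * ((EuclideanSpace.single b (1:ℂ)) n * (E (i+b) (j+b)) x) = 0
    rw [EuclideanSpace.single_apply, if_neg (fun h => hb h.symm)]
    simp
  · simp

lemma inner_toEuclideanLin {n : Type*} [Fintype n] [DecidableEq n] (u v : EuclideanSpace ℂ n)
    (Θ : Matrix n n ℂ) :
    ⟪u, Matrix.toEuclideanLin Θ v⟫ = ∑ p, ∑ q, (starRingEnd ℂ) (u p) * (Θ p q * v q) := by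
  rw [Matrix.toEuclideanLin_apply, PiLp.inner_apply]
  simp [Matrix.mulVec, dotProduct, Finset.mul_sum]
  exact Finset.sum_congr rfl fun x _ => by rw [Finset.sum_mul]; exact Finset.sum_congr rfl fun _ _ => by ring

lemma key {N M : ℕ} (E : Bits N → Bits N → EuclideanSpace ℂ (Fin M)) (i j m : Bits N)
    (X : Matrix (Fin M) (Fin M) ℂ) :
    ⟪Es E i j, Matrix.toEuclideanLin (projTens m X) (Es E i j)⟫
      = (2 ^ N : ℂ)⁻¹ * ⟪E (i + m) (j + m), Matrix.toEuclideanLin X (E (i + m) (j + m))⟫ := by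
  rw [inner_toEuclideanLin, inner_toEuclideanLin]
  have hA : ∀ p q : Bits N × Fin M,
      (starRingEnd ℂ) (Es E i j p) * (projTens m X p q * Es E i j q)
      = (if p.1 = m then 1 else 0) * ((if q.1 = m then 1 else 0) *
        ((2 ^ N : ℂ)⁻¹ * ((starRingEnd ℂ) (E (i+m) (j+m) p.2) *
          (X p.2 q.2 * E (i+m) (j+m) q.2)))) := by
    rintro ⟨n, x⟩ ⟨n', y⟩
    by_cases h1 : n = m
    · by_cases h2 : n' = m
      · simp only [projTens, Matrix.of_apply, Es_apply]
        rw [h1, h2]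
        simp only [eq_self_iff_true, and_self, if_true, one_mul]
        simp only [map_mul, map_pow, map_neg, map_one, Complex.conj_ofReal]
        have hc : ((((Real.sqrt (2 ^ N))⁻¹ : ℝ)) : ℂ) * (((Real.sqrt (2 ^ N))⁻¹ : ℝ) : ℂ)
            = (2 ^ N : ℂ)⁻¹ := by
          rw [← Complex.ofReal_mul, ← mul_inv, Real.mul_self_sqrt (by positivity)]
          push_cast; ring
        have hs : ((-1 : ℂ) ^ bdot m (i + j)) * ((-1 : ℂ) ^ bdot m (i + j)) = 1 := by
          rw [← pow_add, ← two_mul, pow_mul]; norm_num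
        calc _ = ((((Real.sqrt (2 ^ N))⁻¹ : ℝ) : ℂ) * (((Real.sqrt (2 ^ N))⁻¹ : ℝ) : ℂ)) *
              (((-1 : ℂ) ^ bdot m (i + j)) * ((-1 : ℂ) ^ bdot m (i + j))) *
              ((starRingEnd ℂ) (E (i+m) (j+m) x) * (X x y * E (i+m) (j+m) y)) := by ring
          _ = _ := by rw [hc, hs]; ring
      · simp [projTens, h2]
    · simp [projTens, h1]
  simp only [hA]
  simp only [Fintype.sum_prod_type]
  simp only [ite_mul, one_mul, zero_mul, Finset.sum_ite_irrel, Finset.sum_const_zero,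
    Finset.sum_ite_eq', Finset.mem_univ, if_pos]
  rw [Finset.mul_sum]
  congr 1; funext x
  rw [Finset.mul_sum]

lemma projTens_posSemidef {N M : ℕ} (m : Bits N) {X : Matrix (Fin M) (Fin M) ℂ}
    (hX : X.PosSemidef) : (projTens m X).PosSemidef := by
  have hx : ∀ x y, star (X y x) = X x y := by
    intro x y
    conv_rhs => rw [← hX.1]
    rfl
  refine Matrix.PosSemidef.of_dotProduct_mulVec_nonneg ?_ ?_
  · ext ⟨n, x⟩ ⟨n', y⟩
    simp only [Matrix.conjTranspose_apply, projTens, Matrix.of_apply, star_mul']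
    by_cases h1 : n = m <;> by_cases h2 : n' = m <;>
      simp [h1, h2, hx, and_comm]
  · intro v
    have h := hX.dotProduct_mulVec_nonneg (fun t => v (m, t))
    have heq : dotProduct (star v) (Matrix.mulVec (projTens m X) v)
        = dotProduct (star (fun t => v (m, t)))
          (Matrix.mulVec X (fun t => v (m, t))) := by
      simp only [dotProduct, Matrix.mulVec, Pi.star_apply, Finset.mul_sum]
      have hA : ∀ p q : Bits N × Fin M,
          star (v p) * (projTens m X p q * v q)
          = (if p.1 = m then 1 else 0) * ((if q.1 = m then 1 else 0) *
            (star (v (m, p.2)) * (X p.2 q.2 * v (m, q.2)))) := by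
        rintro ⟨n, x⟩ ⟨n', y⟩
        by_cases h1 : n = m
        · by_cases h2 : n' = m
          · simp only [projTens, Matrix.of_apply]
            rw [h1, h2]
            simp only [eq_self_iff_true, and_self, if_true, one_mul]
          · simp [projTens, h2]
        · simp [projTens, h1]
      calc ∑ p : Bits N × Fin M, ∑ q : Bits N × Fin M, star (v p) * (projTens m X p q * v q)
          = ∑ p : Bits N × Fin M, ∑ q : Bits N × Fin M,
            (if p.1 = m then 1 else 0) * ((if q.1 = m then 1 else 0) *
              (star (v (m, p.2)) * (X p.2 q.2 * v (m, q.2)))) := by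
            exact Finset.sum_congr rfl fun p _ => Finset.sum_congr rfl fun q _ => hA p q
        _ = ∑ x : Fin M, ∑ y : Fin M, star (v (m, x)) * (X x y * v (m, y)) := by
            simp only [Fintype.sum_prod_type]
            simp only [ite_mul, one_mul, zero_mul, Finset.sum_ite_irrel, Finset.sum_const_zero,
              Finset.sum_ite_eq', Finset.mem_univ, if_pos]
        _ = _ := rfl
    rw [heq]
    exact h

lemma mutualInfo_shift {G B : Type*} [AddCommGroup G] [Fintype G] [DecidableEq G] [Fintype B]
    (p : G → B → ℝ) (hrow : ∀ i, ∑ a, p i a = ((Fintype.card G : ℝ))⁻¹) :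
    mutualInfo (fun (i : G) (ma : G × B) => (Fintype.card G : ℝ)⁻¹ * p (i + ma.1) ma.2)
      = mutualInfo p := by
  classical
  set K : ℝ := (Fintype.card G : ℝ) with hK
  have hKpos : 0 < K := by
    rw [hK]
    exact_mod_cast Fintype.card_pos
  have hKc : K * K⁻¹ = 1 := mul_inv_cancel₀ (ne_of_gt hKpos)
  have hshift : ∀ (f : G → ℝ) (m : G), ∑ i, f (i + m) = ∑ i, f i :=
    fun f m => Fintype.sum_equiv (Equiv.addRight m) _ _ (fun i => rfl)
  have hconst : ∀ (c : ℝ), ∑ _i : G, c = K * c := by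
    intro c
    rw [Finset.sum_const, Finset.card_univ, nsmul_eq_mul, hK]
  have htot : ∑ k : G, ∑ a, p k a = 1 := by
    calc ∑ k : G, ∑ a, p k a = ∑ _k : G, K⁻¹ := Finset.sum_congr rfl (fun k _ => hrow k)
      _ = K * K⁻¹ := hconst _
      _ = 1 := hKc
  have hra : ∑ a, ∑ i, p i a = 1 := by rw [Finset.sum_comm]; exact htot
  unfold mutualInfo
  have e1 : (∑ i : G, ent2 (∑ ma : G × B, K⁻¹ * p (i + ma.1) ma.2))
      = ∑ i : G, ent2 (∑ a, p i a) := by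
    refine Finset.sum_congr rfl fun i _ => ?_
    rw [hrow i]
    congr 1
    rw [Fintype.sum_prod_type]
    calc ∑ m : G, ∑ a, K⁻¹ * p (i+m) a = ∑ _m : G, K⁻¹ * K⁻¹ := by
          refine Finset.sum_congr rfl (fun m _ => ?_)
          rw [← Finset.mul_sum, hrow]
      _ = K * (K⁻¹ * K⁻¹) := hconst _
      _ = K⁻¹ := by rw [← mul_assoc, hKc, one_mul]
  have e2 : (∑ ma : G × B, ent2 (∑ i, K⁻¹ * p (i + ma.1) ma.2))
      = K * ent2 K⁻¹ + ∑ a, ent2 (∑ i, p i a) := by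
    rw [Fintype.sum_prod_type]
    have h2 : ∀ m a, ent2 (∑ i, K⁻¹ * p (i + m) a)
        = (∑ i, p i a) * ent2 K⁻¹ + K⁻¹ * ent2 (∑ i, p i a) := by
      intro m a
      rw [← Finset.mul_sum, hshift (fun k => p k a) m]
      exact ent2_mul _ _
    calc ∑ m : G, ∑ a, ent2 (∑ i, K⁻¹ * p (i + m) a)
        = ∑ _m : G, ((∑ a, ∑ i, p i a) * ent2 K⁻¹ + K⁻¹ * ∑ a, ent2 (∑ i, p i a)) := by
          refine Finset.sum_congr rfl fun m _ => ?_
          simp only [h2]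
          rw [Finset.sum_add_distrib, ← Finset.sum_mul, ← Finset.mul_sum]
      _ = K * ((∑ a, ∑ i, p i a) * ent2 K⁻¹ + K⁻¹ * ∑ a, ent2 (∑ i, p i a)) := hconst _
      _ = K * ent2 K⁻¹ + ∑ a, ent2 (∑ i, p i a) := by
          rw [hra, one_mul, mul_add, ← mul_assoc, hKc, one_mul]
  have e3 : (∑ i : G, ∑ ma : G × B, ent2 (K⁻¹ * p (i + ma.1) ma.2))
      = K * ent2 K⁻¹ + ∑ i : G, ∑ a, ent2 (p i a) := by
    simp only [Fintype.sum_prod_type]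
    rw [Finset.sum_comm]
    calc ∑ m : G, ∑ i : G, ∑ a, ent2 (K⁻¹ * p (i + m) a)
        = ∑ _m : G, ∑ i : G, ∑ a, ent2 (K⁻¹ * p i a) := by
          refine Finset.sum_congr rfl fun m _ => ?_
          exact hshift (fun k => ∑ a, ent2 (K⁻¹ * p k a)) m
      _ = K * ∑ i : G, ∑ a, ent2 (K⁻¹ * p i a) := hconst _
      _ = K * ∑ i : G, ∑ a, (p i a * ent2 K⁻¹ + K⁻¹ * ent2 (p i a)) := by
          simp only [ent2_mul]
      _ = K * ((∑ i : G, ∑ a, p i a) * ent2 K⁻¹ + K⁻¹ * ∑ i : G, ∑ a, ent2 (p i a)) := by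
          congr 1
          simp only [Finset.sum_add_distrib, ← Finset.sum_mul, ← Finset.mul_sum]
      _ = K * ent2 K⁻¹ + ∑ i : G, ∑ a, ent2 (p i a) := by
          rw [htot, one_mul, mul_add, ← mul_assoc, hKc, one_mul]
  rw [e1, e2, e3]
  ring

lemma pOut_total {N M : ℕ} {A : Type*} [Fintype A]
    (E : Bits N → Bits N → EuclideanSpace ℂ (Fin M)) (hE : Attack E) (P : POVM A M)
    (i : Bits N) : ∑ a, pOut E P a i = 1 := by
  unfold pOut
  rw [← Complex.re_sum]
  have : ∑ a, ∑ j, ⟪E i j, Matrix.toEuclideanLin (P.X a) (E i j)⟫ = 1 := by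
    rw [Finset.sum_comm]
    have hj : ∀ j : Bits N, ∑ a, ⟪E i j, Matrix.toEuclideanLin (P.X a) (E i j)⟫
        = ⟪E i j, E i j⟫ := by
      intro j
      rw [← inner_sum]
      congr 1
      rw [← LinearMap.sum_apply, ← map_sum, P.sum_one, Matrix.toEuclideanLin_apply,
        Matrix.one_mulVec]
    calc ∑ j : Bits N, ∑ a, ⟪E i j, Matrix.toEuclideanLin (P.X a) (E i j)⟫
        = ∑ j : Bits N, ⟪E i j, E i j⟫ := Finset.sum_congr rfl fun j _ => hj j
      _ = 1 := by rw [hE i i, if_pos rfl]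
  rw [this]
  simp

end Aux

/-- Symmetrization does not change Eve's information: the symmetrized measurement family is a
POVM and its mutual information equals the original information gain. -/
theorem symmetrization_preserves_info {N M : ℕ} (hN : 1 ≤ N) {A : Type*} [Fintype A]
    (E : Bits N → Bits N → EuclideanSpace ℂ (Fin M)) (hE : Attack E) (P : POVM A M) :
    (∀ (m : Bits N) (a : A), (projTens m (P.X a)).PosSemidef)
    ∧ (∑ m : Bits N, ∑ a : A, projTens m (P.X a)) = 1
    ∧ mutualInfo (fun (i : Bits N) (ma : Bits N × A) =>
        (2 ^ N : ℝ)⁻¹ *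
          (∑ j : Bits N,
            ⟪Es E i j, Matrix.toEuclideanLin (projTens ma.1 (P.X ma.2)) (Es E i j)⟫).re)
      = infoGain E P := by
  have hcard : ((Fintype.card (Bits N) : ℝ)) = 2 ^ N := by
    simp [Fintype.card_fun, ZMod.card]
  refine ⟨fun m a => projTens_posSemidef m (P.posSemidef a), ?_, ?_⟩
  · ext ⟨n, x⟩ ⟨n', y⟩
    simp only [Matrix.sum_apply, projTens, Matrix.of_apply]
    have hXsum : ∑ a, P.X a x y = (1 : Matrix (Fin M) (Fin M) ℂ) x y := by
      rw [← P.sum_one]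
      exact (Matrix.sum_apply x y Finset.univ _).symm
    calc ∑ m : Bits N, ∑ a, (if n = m ∧ n' = m then (1:ℂ) else 0) * P.X a x y
        = ∑ m : Bits N, (if n = m ∧ n' = m then (1:ℂ) else 0) * ∑ a, P.X a x y := by
          refine Finset.sum_congr rfl fun m _ => ?_
          rw [Finset.mul_sum]
      _ = (if n = n' then (1:ℂ) else 0) * ∑ a, P.X a x y := by
          rw [← Finset.sum_mul]
          congr 1
          by_cases h : n = n'
          · subst h
            simp
          · rw [if_neg h]
            refine Finset.sum_eq_zero fun m _ => ?_
            exact if_neg fun hnm => h (hnm.1.trans hnm.2.symm)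
      _ = (1 : Matrix (Bits N × Fin M) (Bits N × Fin M) ℂ) (n, x) (n', y) := by
          rw [hXsum]
          by_cases h : n = n' <;> by_cases h2 : x = y <;>
            simp [Matrix.one_apply, Prod.ext_iff, h, h2]
  · have hstep : ∀ (i : Bits N) (ma : Bits N × A),
        (∑ j : Bits N,
          ⟪Es E i j, Matrix.toEuclideanLin (projTens ma.1 (P.X ma.2)) (Es E i j)⟫).re
        = (2 ^ N : ℝ)⁻¹ * pOut E P ma.2 (i + ma.1) := by
      rintro i ⟨m, a⟩
      have h1 : ∑ j : Bits N,
          ⟪Es E i j, Matrix.toEuclideanLin (projTens m (P.X a)) (Es E i j)⟫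
          = (2 ^ N : ℂ)⁻¹ * ∑ j : Bits N,
            ⟪E (i + m) j, Matrix.toEuclideanLin (P.X a) (E (i + m) j)⟫ := by
        rw [Finset.mul_sum]
        calc ∑ j : Bits N, ⟪Es E i j, Matrix.toEuclideanLin (projTens m (P.X a)) (Es E i j)⟫
            = ∑ j : Bits N, (2 ^ N : ℂ)⁻¹ *
              ⟪E (i + m) (j + m), Matrix.toEuclideanLin (P.X a) (E (i + m) (j + m))⟫ :=
              Finset.sum_congr rfl fun j _ => key E i j m (P.X a)
          _ = _ := Fintype.sum_equiv (Equiv.addRight m) _ _ (fun j => rfl)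
      rw [h1]
      have h2 : (2 ^ N : ℂ)⁻¹ = Complex.ofReal ((2 ^ N : ℝ)⁻¹) := by push_cast; ring
      rw [h2, Complex.re_ofReal_mul]
      rfl
    have hfun : (fun (i : Bits N) (ma : Bits N × A) =>
        (2 ^ N : ℝ)⁻¹ *
          (∑ j : Bits N,
            ⟪Es E i j, Matrix.toEuclideanLin (projTens ma.1 (P.X ma.2)) (Es E i j)⟫).re)
        = (fun (i : Bits N) (ma : Bits N × A) =>
          (Fintype.card (Bits N) : ℝ)⁻¹ *
            ((2 ^ N : ℝ)⁻¹ * pOut E P ma.2 (i + ma.1))) := by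
      funext i ma
      rw [hstep i ma, hcard]
    rw [hfun]
    unfold infoGain
    exact mutualInfo_shift (fun i a => (2 ^ N : ℝ)⁻¹ * pOut E P a i)
      (fun i => by
        rw [← Finset.mul_sum, pOut_total E hE P i, mul_one, hcard])


end IDT
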